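/- In the two-dimensional dynamical source construction, the sequence (Z_n)_{n≥1} is i.i.d. with common distribution P_Z, and for every n ≥ 1 the random variable Z_n is statistically independent of the random vector (X_1, …, X_n). -/

import Mathlib

open MeasureTheory ProbabilityTheory Filter

/-- The left endpoint of the `j`-th partition interval: the cumulative mass of the indices
preceding `j`.  The `j`-th open interval of the partition is `(cum p j, cum p j + p j)`. -/
noncomputable def cum {m : ℕ} (p : Fin m → ℝ) (j : Fin m) : ℝ :=
  ∑ j' ∈ Finset.univ.filter (fun j' => j' < j), p j'

namespace Stmt2Aux

variable {m : ℕ} {p : Fin m → ℝ}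

lemma cum_nonneg (hp : ∀ j, 0 ≤ p j) (j : Fin m) : 0 ≤ cum p j :=
  Finset.sum_nonneg fun i _ => hp i

lemma cum_insert (j : Fin m) :
    cum p j + p j = ∑ i ∈ insert j (Finset.univ.filter (fun i => i < j)), p i := by
  rw [Finset.sum_insert (by simp), cum]; ring

lemma cum_step (hp : ∀ j, 0 ≤ p j) {j j' : Fin m} (h : j < j') :
    cum p j + p j ≤ cum p j' := by
  rw [cum_insert, cum]
  apply Finset.sum_le_sum_of_subset_of_nonneg
  · intro i hi
    simp only [Finset.mem_insert, Finset.mem_filter, Finset.mem_univ, true_and] at hi ⊢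
    rcases hi with rfl | hi
    · exact h
    · exact hi.trans h
  · exact fun i _ _ => hp i

lemma cum_add_le (hp : ∀ j, 0 ≤ p j) (j : Fin m) : cum p j + p j ≤ ∑ i, p i := by
  rw [cum_insert]
  exact Finset.sum_le_sum_of_subset_of_nonneg (Finset.subset_univ _) fun i _ _ => hp i

lemma mem_unique (hp : ∀ j, 0 ≤ p j) {θ : ℝ} {j j' : Fin m}
    (hj : θ ∈ Set.Ioo (cum p j) (cum p j + p j))
    (hj' : θ ∈ Set.Ioo (cum p j') (cum p j' + p j')) : j = j' := by
  rcases lt_trichotomy j j' with h | h | h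
  · exact absurd (hj.2.trans_le ((cum_step hp h).trans hj'.1.le)) (lt_irrefl θ)
  · exact h
  · exact absurd (hj'.2.trans_le ((cum_step hp h).trans hj.1.le)) (lt_irrefl θ)

lemma Ioo_subset_unit (hp : ∀ j, 0 ≤ p j) (h1 : ∑ i, p i = 1) (j : Fin m) :
    Set.Ioo (cum p j) (cum p j + p j) ⊆ Set.Ioo (0:ℝ) 1 := fun θ hθ =>
  ⟨(cum_nonneg hp j).trans_lt hθ.1, hθ.2.trans_le (h1 ▸ cum_add_le hp j)⟩

noncomputable def sigIdx (hm : 0 < m) (p : Fin m → ℝ) (θ : ℝ) : Fin m :=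
  if h : ∃ i, θ ∈ Set.Ioo (cum p i) (cum p i + p i) then h.choose else ⟨0, hm⟩

lemma sigIdx_eq (hm : 0 < m) (hp : ∀ j, 0 ≤ p j) {θ : ℝ} {i : Fin m}
    (h : θ ∈ Set.Ioo (cum p i) (cum p i + p i)) : sigIdx hm p θ = i := by
  have he : ∃ i, θ ∈ Set.Ioo (cum p i) (cum p i + p i) := ⟨i, h⟩
  rw [sigIdx, dif_pos he]
  exact mem_unique hp he.choose_spec h

lemma measurable_sigIdx (hm : 0 < m) (hp : ∀ j, 0 ≤ p j) : Measurable (sigIdx hm p) := by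
  apply measurable_to_countable'
  intro i
  classical
  have : sigIdx hm p ⁻¹' {i} = Set.Ioo (cum p i) (cum p i + p i) ∪
      (if i = ⟨0, hm⟩ then (⋃ i', Set.Ioo (cum p i') (cum p i' + p i'))ᶜ else ∅) := by
    ext θ
    simp only [Set.mem_preimage, Set.mem_singleton_iff, Set.mem_union]
    constructor
    · intro h
      by_cases he : ∃ i', θ ∈ Set.Ioo (cum p i') (cum p i' + p i')
      · obtain ⟨i', hi'⟩ := he
        left; rwa [← h, sigIdx_eq hm hp hi']
      · right
        rw [sigIdx, dif_neg he] at h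
        rw [if_pos h.symm]
        simpa using he
    · intro h
      rcases h with h | h
      · exact sigIdx_eq hm hp h
      · split_ifs at h with hi
        · rw [hi, sigIdx, dif_neg]
          simpa using h
        · exact absurd h (Set.notMem_empty θ)
  rw [this]
  apply measurableSet_Ioo.union
  split_ifs
  · exact (MeasurableSet.iUnion fun i' => measurableSet_Ioo).compl
  · exact MeasurableSet.empty

variable {γ : Type*}

noncomputable def traj (g : ℝ → γ → ℝ) (z : ℕ → γ) (θ : ℝ) : ℕ → ℝ
  | 0 => θ
  | n+1 => g (traj g z θ n) (z n)

lemma traj_congr (g : ℝ → γ → ℝ) {z z' : ℕ → γ} (θ : ℝ) :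
    ∀ n, (∀ m, m < n → z m = z' m) → traj g z θ n = traj g z' θ n
  | 0, _ => rfl
  | n+1, h => by
    rw [traj, traj, traj_congr g θ n (fun m hm => h m (hm.trans (Nat.lt_succ_self n))),
      h n (Nat.lt_succ_self n)]

lemma measurable_traj {g : ℝ → γ → ℝ} (hg : ∀ j, Measurable (fun θ => g θ j)) (z : ℕ → γ) :
    ∀ n, Measurable (fun θ => traj g z θ n)
  | 0 => measurable_id
  | n+1 => (hg (z n)).comp (measurable_traj hg z n)

lemma volume_affine {c p : ℝ} (hp : 0 < p) (S : Set ℝ) :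
    volume ((fun φ => (φ - c) / p) ⁻¹' S) = ENNReal.ofReal p * volume S := by
  have h1 : (fun φ => (φ - c) / p) ⁻¹' S
      = (fun φ => φ + (-c)) ⁻¹' ((fun y => y * p⁻¹) ⁻¹' S) := by
    ext φ; simp [sub_eq_add_neg, div_eq_mul_inv]
  rw [h1, measure_preimage_add_right, Real.volume_preimage_mul_right (inv_ne_zero hp.ne'),
    inv_inv, abs_of_pos hp]

lemma volume_slice {c p : ℝ} (hp : 0 < p) (B : Set ℝ) :
    volume (Set.Ioo c (c + p) ∩ (fun φ => (φ - c) / p) ⁻¹' B)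
      = ENNReal.ofReal p * volume (B ∩ Set.Ioo 0 1) := by
  have h1 : Set.Ioo c (c + p) ∩ (fun φ => (φ - c) / p) ⁻¹' B
      = (fun φ => (φ - c) / p) ⁻¹' (B ∩ Set.Ioo 0 1) := by
    ext φ
    simp only [Set.mem_inter_iff, Set.mem_preimage, Set.mem_Ioo]
    constructor
    · rintro ⟨⟨h1, h2⟩, hB⟩
      exact ⟨hB, div_pos (by linarith) hp, (div_lt_one hp).mpr (by linarith)⟩
    · rintro ⟨hB, h1, h2⟩
      have h3 := (div_lt_one hp).mp h2
      have h4 := (lt_div_iff₀ hp).mp h1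
      exact ⟨⟨by linarith, by linarith⟩, hB⟩
  rw [h1, volume_affine hp]

lemma measure_inter_preimage_eq_sum {Ω : Type*} [MeasurableSpace Ω] (P : Measure Ω)
    {γ : Type*} [MeasurableSpace γ] [MeasurableSingletonClass γ] [Finite γ]
    {f : Ω → γ} (hf : Measurable f) {W : Set Ω} (hW : MeasurableSet W) (t : Set γ) :
    P (W ∩ f ⁻¹' t) = ∑ v ∈ t.toFinite.toFinset, P (W ∩ f ⁻¹' {v}) := by
  have h1 : W ∩ f ⁻¹' t = ⋃ v ∈ t.toFinite.toFinset, W ∩ f ⁻¹' {v} := by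
    ext ω
    simp only [Set.mem_inter_iff, Set.mem_preimage, Set.mem_iUnion, Set.Finite.mem_toFinset,
      Set.mem_singleton_iff, exists_prop]
    constructor
    · rintro ⟨hω, ht⟩; exact ⟨f ω, ht, hω, rfl⟩
    · rintro ⟨v, hv, hω, hfv⟩; exact ⟨hω, hfv ▸ hv⟩
  rw [h1, measure_biUnion_finset]
  · intro v _ v' _ hne
    apply Set.disjoint_left.mpr
    rintro ω ⟨_, h1⟩ ⟨_, h2⟩
    exact hne ((Set.mem_singleton_iff.mp h1) ▸ (Set.mem_singleton_iff.mp h2) ▸ rfl)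
  · exact fun v _ => hW.inter (hf (measurableSet_singleton v))

end Stmt2Aux
open Stmt2Aux in
/-- Lemma 3(a) of the paper, for the two-dimensional dynamical source construction driven by a
uniform initial state on the open unit square: the sequence `Z` is i.i.d. with common
distribution `PZ`, and for every `n` the variable `Z n` is independent of `(X 0, …, X n)`.
(Indices are 0-based: `Θ 0` is the paper's `Θ₁`, etc.) -/
theorem stmt_2
    {Ω : Type*} [MeasurableSpace Ω] (P : Measure Ω) [IsProbabilityMeasure P]
    {a b c : ℕ}
    (PXY : Fin a × Fin b → ℝ)
    (hPXY0 : ∀ q, 0 ≤ PXY q) (hPXY1 : ∑ q : Fin a × Fin b, PXY q = 1)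
    (PX : Fin a → ℝ) (hPX : ∀ i, PX i = ∑ k, PXY (i, k))
    (PY : Fin b → ℝ) (hPY : ∀ k, PY k = ∑ i, PXY (i, k))
    (PZ : Fin c → ℝ) (hPZ0 : ∀ j, 0 ≤ PZ j) (hPZ1 : ∑ j, PZ j = 1)
    (ξ : Fin a × Fin c → Fin b)
    (hξ : ∀ i k, ∑ j ∈ Finset.univ.filter (fun j => ξ (i, j) = k), PX i * PZ j = PXY (i, k))
    (T0 : ℝ → Fin b → ℝ)
    (hT0 : ∀ (k : Fin b) (i : Fin a), 0 < PX i →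
      ∀ θ ∈ Set.Icc (cum PX i) (cum PX i + PX i),
        T0 θ k = (∑ i' ∈ Finset.univ.filter (fun i' => i' < i), PXY (i', k)) / PY k
          + (θ - cum PX i) * (PXY (i, k) / (PY k * PX i)))
    (T1 : ℝ → ℝ)
    (hT1 : ∀ j : Fin c, ∀ φ ∈ Set.Ioo (cum PZ j) (cum PZ j + PZ j),
      T1 φ = (φ - cum PZ j) / PZ j)
    (Θ Φ : ℕ → Ω → ℝ) (X : ℕ → Ω → Fin a) (Z : ℕ → Ω → Fin c) (Y : ℕ → Ω → Fin b)
    (hΘm : ∀ n, Measurable (Θ n)) (hΦm : ∀ n, Measurable (Φ n))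
    (hXm : ∀ n, Measurable (X n)) (hZm : ∀ n, Measurable (Z n))
    (hinit : Measure.map (fun ω => (Θ 0 ω, Φ 0 ω)) P
      = volume.restrict (Set.Ioo (0:ℝ) 1 ×ˢ Set.Ioo (0:ℝ) 1))
    (hXdef : ∀ n, ∀ᵐ ω ∂P, Θ n ω ∈ Set.Ioo (cum PX (X n ω)) (cum PX (X n ω) + PX (X n ω)))
    (hZdef : ∀ n, ∀ᵐ ω ∂P, Φ n ω ∈ Set.Ioo (cum PZ (Z n ω)) (cum PZ (Z n ω) + PZ (Z n ω)))
    (hYdef : ∀ n ω, Y n ω = ξ (X n ω, Z n ω))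
    (hΘrec : ∀ n, ∀ᵐ ω ∂P, Θ (n + 1) ω = T0 (Θ n ω) (Y n ω))
    (hΦrec : ∀ n, ∀ᵐ ω ∂P, Φ (n + 1) ω = T1 (Φ n ω))
    :
    (iIndepFun Z P ∧
      ∀ n j, P {ω | Z n ω = j} = ENNReal.ofReal (PZ j)) ∧
    (∀ n : ℕ, IndepFun (Z n) (fun ω (l : Fin (n + 1)) => X l.val ω) P) := by
  classical
  obtain ⟨ω₀⟩ : Nonempty Ω := by
    by_contra h
    rw [not_nonempty_iff] at h
    have h1 : (Set.univ : Set Ω) = ∅ := Set.univ_eq_empty_iff.mpr h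
    have h2 := measure_univ (μ := P)
    rw [h1, measure_empty] at h2
    exact zero_ne_one h2
  have ha : 0 < a := (X 0 ω₀).pos
  have hc : 0 < c := (Z 0 ω₀).pos
  have hPX0 : ∀ i, 0 ≤ PX i := fun i => (hPX i) ▸ Finset.sum_nonneg fun k _ => hPXY0 _
  -- the master computation
  have master : ∀ N (A : Set ℝ), MeasurableSet A → ∀ (E : Fin N → Finset (Fin c))
      (B : Set ℝ), MeasurableSet B →
      P {ω | Θ 0 ω ∈ A ∧ (∀ k : Fin N, Z k.val ω ∈ E k) ∧ Φ N ω ∈ B}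
        = volume (A ∩ Set.Ioo 0 1) *
            ((∏ k, ∑ j ∈ E k, ENNReal.ofReal (PZ j)) * volume (B ∩ Set.Ioo 0 1)) := by
    intro N
    induction N with
    | zero =>
      intro A hA E B hB
      have hset : {ω | Θ 0 ω ∈ A ∧ (∀ k : Fin 0, Z k.val ω ∈ E k) ∧ Φ 0 ω ∈ B}
          = (fun ω => (Θ 0 ω, Φ 0 ω)) ⁻¹' (A ×ˢ B) := by
        ext ω; simp [Set.mem_prod]
      rw [hset, ← Measure.map_apply ((hΘm 0).prodMk (hΦm 0)) (hA.prod hB), hinit,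
        Measure.restrict_apply (hA.prod hB), Set.prod_inter_prod, Measure.volume_eq_prod,
        Measure.prod_prod]
      simp
    | succ N ih =>
      intro A hA E B hB
      set D : Fin c → Set ℝ := fun j =>
        Set.Ioo (cum PZ j) (cum PZ j + PZ j) ∩ (fun φ => (φ - cum PZ j) / PZ j) ⁻¹' B with hDdef
      have hDm : ∀ j, MeasurableSet (D j) := fun j =>
        measurableSet_Ioo.inter ((by fun_prop : Measurable fun φ => (φ - cum PZ j) / PZ j) hB)
      have hae : {ω | Θ 0 ω ∈ A ∧ (∀ k : Fin (N+1), Z k.val ω ∈ E k) ∧ Φ (N+1) ω ∈ B}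
          =ᵐ[P] ⋃ j ∈ E (Fin.last N),
            {ω | Θ 0 ω ∈ A ∧ (∀ k : Fin N, Z k.val ω ∈ E k.castSucc) ∧ Φ N ω ∈ D j} := by
        rw [Filter.eventuallyEq_set]
        filter_upwards [hZdef N, hΦrec N] with ω hz hφ
        simp only [Set.mem_setOf_eq, Set.mem_iUnion, exists_prop]
        constructor
        · rintro ⟨hA0, hE, hB1⟩
          refine ⟨Z N ω, ?_, hA0, fun k => ?_, hz, ?_⟩
          · have := hE (Fin.last N); simpa using this
          · have := hE k.castSucc; simpa using this
          · show (Φ N ω - cum PZ (Z N ω)) / PZ (Z N ω) ∈ B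
            rw [← hT1 (Z N ω) _ hz, ← hφ]; exact hB1
        · rintro ⟨j, hjE, hA0, hEk, hzj, hpre⟩
          have hZj : Z N ω = j := mem_unique hPZ0 hz hzj
          refine ⟨hA0, fun k => ?_, ?_⟩
          · rcases Fin.eq_castSucc_or_eq_last k with ⟨k', rfl⟩ | rfl
            · simpa using hEk k'
            · simpa [hZj] using hjE
          · rw [hφ, hT1 j _ hzj]; exact hpre
      have hmeas : ∀ j ∈ E (Fin.last N), MeasurableSet
          {ω | Θ 0 ω ∈ A ∧ (∀ k : Fin N, Z k.val ω ∈ E k.castSucc) ∧ Φ N ω ∈ D j} := by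
        intro j _
        have hset : {ω | Θ 0 ω ∈ A ∧ (∀ k : Fin N, Z k.val ω ∈ E k.castSucc) ∧ Φ N ω ∈ D j}
            = (Θ 0 ⁻¹' A) ∩ ((⋂ k : Fin N, Z k.val ⁻¹' (E k.castSucc : Set (Fin c)))
                ∩ Φ N ⁻¹' D j) := by
          ext ω; simp [Set.mem_iInter]
        rw [hset]
        exact (hΘm 0 hA).inter ((MeasurableSet.iInter fun (k : Fin N) => hZm k.val MeasurableSet.of_discrete).inter
          (hΦm N (hDm j)))
      have hdisj : (↑(E (Fin.last N)) : Set (Fin c)).PairwiseDisjoint (fun j =>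
          {ω | Θ 0 ω ∈ A ∧ (∀ k : Fin N, Z k.val ω ∈ E k.castSucc) ∧ Φ N ω ∈ D j}) := by
        intro j _ j' _ hne
        apply Set.disjoint_left.mpr
        rintro ω ⟨-, -, hj, -⟩ ⟨-, -, hj', -⟩
        exact hne (mem_unique hPZ0 hj hj')
      rw [measure_congr hae, measure_biUnion_finset hdisj hmeas]
      have hterm : ∀ j ∈ E (Fin.last N),
          P {ω | Θ 0 ω ∈ A ∧ (∀ k : Fin N, Z k.val ω ∈ E k.castSucc) ∧ Φ N ω ∈ D j}
            = volume (A ∩ Set.Ioo 0 1) *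
                ((∏ k : Fin N, ∑ j' ∈ E k.castSucc, ENNReal.ofReal (PZ j')) *
                  (ENNReal.ofReal (PZ j) * volume (B ∩ Set.Ioo 0 1))) := by
        intro j _
        rw [ih A hA (fun k => E k.castSucc) (D j) (hDm j)]
        congr 2
        have hDsub : D j ⊆ Set.Ioo 0 1 :=
          Set.inter_subset_left.trans (Ioo_subset_unit hPZ0 hPZ1 j)
        rw [Set.inter_eq_left.mpr hDsub]
        rcases lt_or_eq_of_le (hPZ0 j) with hpos | hzero
        · exact volume_slice hpos B
        · rw [hDdef]
          simp [← hzero]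
      rw [Finset.sum_congr rfl hterm, ← Finset.mul_sum, ← Finset.mul_sum, ← Finset.sum_mul,
        Fin.prod_univ_castSucc]
      ring
  have hZsum : ∑ j, ENNReal.ofReal (PZ j) = 1 := by
    rw [← ENNReal.ofReal_sum_of_nonneg fun j _ => hPZ0 j, hPZ1, ENNReal.ofReal_one]
  have hΦlaw : ∀ n (B : Set ℝ), MeasurableSet B →
      P (Φ n ⁻¹' B) = volume (B ∩ Set.Ioo 0 1) := by
    intro n B hB
    have h1 : (Φ n ⁻¹' B) = {ω | Θ 0 ω ∈ (Set.univ : Set ℝ) ∧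
        (∀ k : Fin n, Z k.val ω ∈ (Finset.univ : Finset (Fin c))) ∧ Φ n ω ∈ B} := by
      ext ω; simp
    rw [h1, master n Set.univ MeasurableSet.univ _ B hB]
    simp [hZsum, Real.volume_Ioo]
  have hZIae : ∀ n j, {ω | Z n ω = j}
      =ᵐ[P] Φ n ⁻¹' (Set.Ioo (cum PZ j) (cum PZ j + PZ j)) := by
    intro n j
    rw [Filter.eventuallyEq_set]
    filter_upwards [hZdef n] with ω hz
    simp only [Set.mem_setOf_eq, Set.mem_preimage]
    constructor
    · rintro rfl; exact hz
    · intro h; exact mem_unique hPZ0 hz h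
  have hZsingle : ∀ n j, P {ω | Z n ω = j} = ENNReal.ofReal (PZ j) := by
    intro n j
    rw [measure_congr (hZIae n j), hΦlaw n _ measurableSet_Ioo,
      Set.inter_eq_left.mpr (Ioo_subset_unit hPZ0 hPZ1 j), Real.volume_Ioo]
    congr 1; ring
  have hZset : ∀ n (s : Set (Fin c)), P (Z n ⁻¹' s)
      = ∑ j ∈ s.toFinite.toFinset, ENNReal.ofReal (PZ j) := by
    intro n s
    have h1 := measure_inter_preimage_eq_sum P (hZm n) MeasurableSet.univ s
    simp only [Set.univ_inter] at h1
    rw [h1]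
    exact Finset.sum_congr rfl fun j _ => hZsingle n j
  refine ⟨⟨?_, hZsingle⟩, ?_⟩
  · -- i.i.d. part
    rw [iIndepFun_iff_measure_inter_preimage_eq_mul]
    intro S sets _
    set N := S.sup id + 1 with hN
    have hSN : ∀ i ∈ S, i < N := fun i hi => Nat.lt_succ_of_le (Finset.le_sup (f := id) hi)
    have h1 : (⋂ i ∈ S, Z i ⁻¹' sets i)
        = {ω | Θ 0 ω ∈ (Set.univ : Set ℝ) ∧
            (∀ k : Fin N, Z k.val ω ∈
              (if k.val ∈ S then (sets k.val).toFinite.toFinset else Finset.univ)) ∧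
            Φ N ω ∈ (Set.univ : Set ℝ)} := by
      ext ω
      simp only [Set.mem_iInter, Set.mem_preimage, Set.mem_setOf_eq, Set.mem_univ, true_and,
        and_true]
      constructor
      · intro h k
        split_ifs with hk
        · simpa [Set.Finite.mem_toFinset] using h k.val hk
        · simp
      · intro h i hi
        have h2 := h ⟨i, hSN i hi⟩
        rw [if_pos hi] at h2
        simpa [Set.Finite.mem_toFinset] using h2
    rw [h1, master N Set.univ MeasurableSet.univ _ Set.univ MeasurableSet.univ]
    simp only [Set.univ_inter, Real.volume_Ioo, sub_zero, ENNReal.ofReal_one, one_mul, mul_one]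
    set F : ℕ → ENNReal := fun i => if i ∈ S then
        ∑ j ∈ (sets i).toFinite.toFinset, ENNReal.ofReal (PZ j) else 1 with hF
    have h2 : ∀ k : Fin N,
        (∑ j ∈ (if k.val ∈ S then (sets k.val).toFinite.toFinset else Finset.univ),
          ENNReal.ofReal (PZ j)) = F k.val := by
      intro k; by_cases hk : k.val ∈ S <;> simp [hF, hk, hZsum]
    rw [Finset.prod_congr rfl fun k _ => h2 k, Fin.prod_univ_eq_prod_range F N]
    have h3 : ∀ i ∈ Finset.range N, F i = if i ∈ S then
        ∑ j ∈ (sets i).toFinite.toFinset, ENNReal.ofReal (PZ j) else 1 := fun i _ => rfl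
    rw [Finset.prod_congr rfl h3, Finset.prod_ite_mem,
      Finset.inter_eq_right.mpr (fun i hi => Finset.mem_range.mpr (hSN i hi))]
    exact Finset.prod_congr rfl fun i _ => (hZset i (sets i)).symm
  · -- independence of Z n from (X 0, ..., X n)
    set g : ℝ → Fin c → ℝ := fun θ j =>
      (∑ i' ∈ Finset.univ.filter (fun i' => i' < sigIdx ha PX θ),
          PXY (i', ξ (sigIdx ha PX θ, j))) / PY (ξ (sigIdx ha PX θ, j))
        + (θ - cum PX (sigIdx ha PX θ)) *
          (PXY (sigIdx ha PX θ, ξ (sigIdx ha PX θ, j))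
            / (PY (ξ (sigIdx ha PX θ, j)) * PX (sigIdx ha PX θ))) with hgdef
    have hg : ∀ j, Measurable (fun θ => g θ j) := by
      intro j
      have h1 : (fun θ => g θ j) = (fun q : ℝ × Fin a =>
        (∑ i' ∈ Finset.univ.filter (fun i' => i' < q.2), PXY (i', ξ (q.2, j))) / PY (ξ (q.2, j))
          + (q.1 - cum PX q.2) * (PXY (q.2, ξ (q.2, j)) / (PY (ξ (q.2, j)) * PX q.2)))
        ∘ (fun θ => (θ, sigIdx ha PX θ)) := rfl
      rw [h1]
      refine Measurable.comp ?_ (measurable_id.prodMk (measurable_sigIdx ha hPX0))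
      apply measurable_from_prod_countable_left
      intro i
      measurability
    have hsig : ∀ m, ∀ᵐ ω ∂P, sigIdx ha PX (Θ m ω) = X m ω := fun m =>
      (hXdef m).mono fun ω h => sigIdx_eq ha hPX0 h
    have hstep : ∀ m, ∀ᵐ ω ∂P, Θ (m+1) ω = g (Θ m ω) (Z m ω) := by
      intro m
      filter_upwards [hΘrec m, hXdef m, hsig m] with ω h1 h2 h3
      have hpos : 0 < PX (X m ω) := by
        have h4 := h2.1; have h5 := h2.2; linarith
      rw [h1, hYdef m ω, hT0 (ξ (X m ω, Z m ω)) (X m ω) hpos _ (Set.Ioo_subset_Icc_self h2),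
        hgdef]
      simp only [h3]
    have htraj : ∀ m, ∀ᵐ ω ∂P, Θ m ω = traj g (fun i => Z i ω) (Θ 0 ω) m := by
      intro m
      induction m with
      | zero => filter_upwards with ω; rfl
      | succ m ih =>
        filter_upwards [ih, hstep m] with ω h1 h2
        rw [h2, h1, traj]
    have hIoo : ∀ j : Fin c, volume (Set.Ioo (cum PZ j) (cum PZ j + PZ j) ∩ Set.Ioo 0 1)
        = ENNReal.ofReal (PZ j) := by
      intro j
      rw [Set.inter_eq_left.mpr (Ioo_subset_unit hPZ0 hPZ1 j), Real.volume_Ioo]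
      congr 1; ring
    intro n
    rw [indepFun_iff_measure_inter_preimage_eq_mul]
    intro s t _ _
    set Xv : Ω → Fin (n+1) → Fin a := fun ω l => X l.val ω with hXvdef
    have hXvm : Measurable Xv := measurable_pi_lambda _ fun l => hXm l.val
    have hpatmeas : ∀ f : Fin n → Fin c, MeasurableSet {ω | ∀ k : Fin n, Z k.val ω = f k} := by
      intro f
      have h1 : {ω | ∀ k : Fin n, Z k.val ω = f k} = ⋂ k : Fin n, Z k.val ⁻¹' {f k} := by
        ext ω; simp [Set.mem_iInter]
      rw [h1]
      exact MeasurableSet.iInter fun k => hZm k.val (measurableSet_singleton _)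
    have hpartition : ∀ (W : Set Ω), MeasurableSet W →
        P W = ∑ f : Fin n → Fin c, P ({ω | ∀ k : Fin n, Z k.val ω = f k} ∩ W) := by
      intro W hW
      have h1 : W = ⋃ f : Fin n → Fin c, ({ω | ∀ k : Fin n, Z k.val ω = f k} ∩ W) := by
        ext ω
        simp only [Set.mem_iUnion, Set.mem_inter_iff, Set.mem_setOf_eq]
        constructor
        · intro h; exact ⟨fun k => Z k.val ω, fun k => rfl, h⟩
        · rintro ⟨f, _, h⟩; exact h
      have hd : Pairwise (Function.onFun Disjoint fun f : Fin n → Fin c =>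
          {ω | ∀ k : Fin n, Z k.val ω = f k} ∩ W) := by
        intro f f' hne
        apply Set.disjoint_left.mpr
        rintro ω ⟨h2, _⟩ ⟨h3, _⟩
        exact hne (funext fun k => (h2 k).symm.trans (h3 k))
      conv_lhs => rw [h1]
      rw [measure_iUnion hd fun f => (hpatmeas f).inter hW, tsum_fintype]
    have hL2 : ∀ (j : Fin c) (v : Fin (n+1) → Fin a),
        P (Xv ⁻¹' {v} ∩ Z n ⁻¹' {j}) = P (Xv ⁻¹' {v}) * ENNReal.ofReal (PZ j) := by
      intro j v
      set AF : (Fin n → Fin c) → Set ℝ := fun f =>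
        {θ | ∀ l : Fin (n+1), sigIdx ha PX
          (traj g (fun m => if h : m < n then f ⟨m, h⟩ else ⟨0, hc⟩) θ l.val) = v l} with hAFdef
      have hAFm : ∀ f, MeasurableSet (AF f) := by
        intro f
        have h1 : AF f = ⋂ l : Fin (n+1), (fun θ => sigIdx ha PX
            (traj g (fun m => if h : m < n then f ⟨m, h⟩ else ⟨0, hc⟩) θ l.val)) ⁻¹' {v l} := by
          ext θ; simp [hAFdef, Set.mem_iInter]
        rw [h1]
        exact MeasurableSet.iInter fun l =>
          ((measurable_sigIdx ha hPX0).comp (measurable_traj hg _ l.val))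
            (measurableSet_singleton _)
      have hevent : ∀ (f : Fin n → Fin c) (B : Set ℝ),
          (({ω | ∀ k : Fin n, Z k.val ω = f k} ∩ (Xv ⁻¹' {v} ∩ Φ n ⁻¹' B) : Set Ω))
            =ᵐ[P] {ω | Θ 0 ω ∈ AF f ∧
              (∀ k : Fin n, Z k.val ω ∈ ({f k} : Finset (Fin c))) ∧ Φ n ω ∈ B} := by
        intro f B
        rw [Filter.eventuallyEq_set]
        filter_upwards [ae_all_iff.mpr fun l : Fin (n+1) => htraj l.val,
          ae_all_iff.mpr fun l : Fin (n+1) => hsig l.val] with ω htr hsg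
        have htrc : (∀ k : Fin n, Z k.val ω = f k) → ∀ l : Fin (n+1),
            sigIdx ha PX (traj g (fun m => if h : m < n then f ⟨m, h⟩ else ⟨0, hc⟩)
              (Θ 0 ω) l.val) = X l.val ω := by
          intro hpat l
          have hzz : ∀ m, m < l.val →
              (if h : m < n then f ⟨m, h⟩ else (⟨0, hc⟩ : Fin c)) = Z m ω := by
            intro m hm
            have hmn : m < n := lt_of_lt_of_le hm (Nat.lt_succ_iff.mp l.isLt)
            rw [dif_pos hmn]
            exact (hpat ⟨m, hmn⟩).symm
          rw [traj_congr (z := fun m => if h : m < n then f ⟨m, h⟩ else (⟨0, hc⟩ : Fin c))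
            (z' := fun i => Z i ω) g (Θ 0 ω) l.val hzz, ← htr l]
          exact hsg l
        simp only [Set.mem_inter_iff, Set.mem_setOf_eq, Set.mem_preimage,
          Set.mem_singleton_iff, Finset.mem_singleton]
        constructor
        · rintro ⟨hpat, hXveq, hBm⟩
          refine ⟨fun l => ?_, hpat, hBm⟩
          rw [htrc hpat l]
          exact congrFun hXveq l
        · rintro ⟨hAFmem, hpat, hBm⟩
          refine ⟨hpat, funext fun l => ?_, hBm⟩
          show X l.val ω = v l
          rw [← htrc hpat l]
          exact hAFmem l
      have hkey1 : ∀ f : Fin n → Fin c,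
          P ({ω | ∀ k : Fin n, Z k.val ω = f k} ∩ (Xv ⁻¹' {v} ∩ Z n ⁻¹' {j}))
            = (volume (AF f ∩ Set.Ioo 0 1) * ∏ k : Fin n, ENNReal.ofReal (PZ (f k)))
              * ENNReal.ofReal (PZ j) := by
        intro f
        have he1 : (({ω | ∀ k : Fin n, Z k.val ω = f k} ∩ (Xv ⁻¹' {v} ∩ Z n ⁻¹' {j}) : Set Ω))
            =ᵐ[P] (({ω | ∀ k : Fin n, Z k.val ω = f k} ∩ (Xv ⁻¹' {v}
              ∩ Φ n ⁻¹' Set.Ioo (cum PZ j) (cum PZ j + PZ j)) : Set Ω)) :=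
          Filter.EventuallyEq.inter Filter.EventuallyEq.rfl
            (Filter.EventuallyEq.inter Filter.EventuallyEq.rfl (hZIae n j))
        rw [measure_congr (he1.trans (hevent f _)),
          master n (AF f) (hAFm f) (fun k => {f k}) _ measurableSet_Ioo]
        simp only [Finset.sum_singleton, hIoo j]
        ring
      have hXvP : P (Xv ⁻¹' {v}) = ∑ f : Fin n → Fin c,
          volume (AF f ∩ Set.Ioo 0 1) * ∏ k : Fin n, ENNReal.ofReal (PZ (f k)) := by
        rw [hpartition _ (hXvm (measurableSet_singleton v))]
        refine Finset.sum_congr rfl fun f _ => ?_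
        have he : (({ω | ∀ k : Fin n, Z k.val ω = f k} ∩ Xv ⁻¹' {v} : Set Ω))
            =ᵐ[P] {ω | Θ 0 ω ∈ AF f ∧ (∀ k : Fin n, Z k.val ω ∈ ({f k} : Finset (Fin c)))
              ∧ Φ n ω ∈ (Set.univ : Set ℝ)} := by
          have h2 := hevent f Set.univ
          simpa [Set.preimage_univ, Set.inter_univ] using h2
        rw [measure_congr he, master n (AF f) (hAFm f) (fun k => {f k}) _ MeasurableSet.univ]
        simp [Real.volume_Ioo]
      rw [hpartition _ ((hXvm (measurableSet_singleton v)).inter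
        (hZm n (measurableSet_singleton j)))]
      rw [Finset.sum_congr rfl fun f _ => hkey1 f, hXvP, Finset.sum_mul]
    have hXt : P (Xv ⁻¹' t) = ∑ v ∈ t.toFinite.toFinset, P (Xv ⁻¹' {v}) := by
      have h1 := measure_inter_preimage_eq_sum P hXvm MeasurableSet.univ t
      simpa [Set.univ_inter] using h1
    calc P (Z n ⁻¹' s ∩ Xv ⁻¹' t)
        = ∑ v ∈ t.toFinite.toFinset, P (Z n ⁻¹' s ∩ Xv ⁻¹' {v}) :=
          measure_inter_preimage_eq_sum P hXvm (hZm n MeasurableSet.of_discrete) t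
      _ = ∑ v ∈ t.toFinite.toFinset, ∑ j ∈ s.toFinite.toFinset,
            P (Xv ⁻¹' {v} ∩ Z n ⁻¹' {j}) := by
          refine Finset.sum_congr rfl fun v _ => ?_
          rw [Set.inter_comm]
          exact measure_inter_preimage_eq_sum P (hZm n) (hXvm (measurableSet_singleton v)) s
      _ = ∑ v ∈ t.toFinite.toFinset, ∑ j ∈ s.toFinite.toFinset,
            P (Xv ⁻¹' {v}) * ENNReal.ofReal (PZ j) :=
          Finset.sum_congr rfl fun v _ => Finset.sum_congr rfl fun j _ => hL2 j v
      _ = (∑ v ∈ t.toFinite.toFinset, P (Xv ⁻¹' {v})) *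
            ∑ j ∈ s.toFinite.toFinset, ENNReal.ofReal (PZ j) := by
          rw [Finset.sum_mul]
          exact Finset.sum_congr rfl fun v _ => (Finset.mul_sum _ _ _).symm
      _ = P (Z n ⁻¹' s) * P (Xv ⁻¹' t) := by
          rw [← hXt, ← hZset n s, mul_comm]
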